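/- Fix positive integers k and ℓ, let n = k·(ℓ+2), and consider 2n circle positions 1, …, 2n (positions 1, …, n on the upper semicircle and n+1, …, 2n on the lower). For 1 ≤ j ≤ k, the j-th upper special chord is {(j−1)(ℓ+2)+1, j(ℓ+2)} and its arc A_j is the set of the ℓ positions strictly between its endpoints; the j-th lower special chord is {n+(j−1)(ℓ+2)+1, n+j(ℓ+2)} and its arc A_{k+j} is the set of the ℓ positions strictly between its endpoints. Let U = A_1 ∪ ⋯ ∪ A_k and L = A_{k+1} ∪ ⋯ ∪ A_{2k}. For a bijection M : U → L, let G(M) be the simple graph on vertex set Fin (2k) ⊕ U in which the vertex Sum.inl j represents the j-th special chord (upper chords for 1 ≤ j ≤ k, lower chords for k+1 ≤ j ≤ 2k), the vertex Sum.inr x represents the chord {x, M(x)}, and two vertices are adjacent if and only if their chords interleave. Then for any two good matchings M₁ and M₂: if there exists a graph isomorphism φ : G(M₁) ≃ G(M₂) satisfying φ (Sum.inl j) = Sum.inl j for every j ∈ Fin (2k), then M₁ = M₂. -/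

import Mathlib

/-- The `ℓ` positions strictly between the endpoints `j·(ℓ+2)+1` and `(j+1)·(ℓ+2)` of the
`(j+1)`-st upper special chord (positions are `1, …, 2n` with `n = k(ℓ+2)`; here `0 ≤ j < k`). -/
def upperArc (ℓ j : ℕ) : Set ℕ := Set.Ioo (j * (ℓ + 2) + 1) ((j + 1) * (ℓ + 2))

/-- The `ℓ` positions strictly between the endpoints of the `(j+1)`-st lower special chord. -/
def lowerArc (k ℓ j : ℕ) : Set ℕ :=
  Set.Ioo (k * (ℓ + 2) + j * (ℓ + 2) + 1) (k * (ℓ + 2) + (j + 1) * (ℓ + 2))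

/-- `U`, the union of the upper arcs. -/
def upperPts (k ℓ : ℕ) : Set ℕ := ⋃ j < k, upperArc ℓ j

/-- `L`, the union of the lower arcs. -/
def lowerPts (k ℓ : ℕ) : Set ℕ := ⋃ j < k, lowerArc k ℓ j

/-- A matching (bijection) `M : U → L` is good if no three points of one upper arc are matched
into a single lower arc. -/
def GoodMatching (k ℓ : ℕ) (M : ↥(upperPts k ℓ) ≃ ↥(lowerPts k ℓ)) : Prop :=
  ¬ ∃ i < k, ∃ j < k, ∃ x₁ x₂ x₃ : ↥(upperPts k ℓ),
      x₁ ≠ x₂ ∧ x₁ ≠ x₃ ∧ x₂ ≠ x₃ ∧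
      (x₁ : ℕ) ∈ upperArc ℓ i ∧ (x₂ : ℕ) ∈ upperArc ℓ i ∧ (x₃ : ℕ) ∈ upperArc ℓ i ∧
      (M x₁ : ℕ) ∈ lowerArc k ℓ j ∧ (M x₂ : ℕ) ∈ lowerArc k ℓ j ∧ (M x₃ : ℕ) ∈ lowerArc k ℓ j

/-- The endpoints `(lo, hi)` of the `(j+1)`-st special chord: for `j < k` the upper chords,
for `k ≤ j < 2k` the lower ones. -/
def specialChord (k ℓ : ℕ) (j : Fin (2 * k)) : ℕ × ℕ :=
  if (j : ℕ) < k then ((j : ℕ) * (ℓ + 2) + 1, ((j : ℕ) + 1) * (ℓ + 2))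
  else (k * (ℓ + 2) + ((j : ℕ) - k) * (ℓ + 2) + 1, k * (ℓ + 2) + ((j : ℕ) - k + 1) * (ℓ + 2))

/-- The chord `(lo, hi)` associated to a vertex: special chords for `Sum.inl j`, matching
chords `{x, M x}` for `Sum.inr x`. -/
def chordOf (k ℓ : ℕ) (M : ↥(upperPts k ℓ) ≃ ↥(lowerPts k ℓ)) :
    Fin (2 * k) ⊕ ↥(upperPts k ℓ) → ℕ × ℕ :=
  Sum.elim (specialChord k ℓ) (fun x => ((x : ℕ), (M x : ℕ)))

/-- Two chords, given as pairs (lower endpoint, higher endpoint), interleave. -/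
def Interleave (p q : ℕ × ℕ) : Prop :=
  (p.1 < q.1 ∧ q.1 < p.2 ∧ p.2 < q.2) ∨ (q.1 < p.1 ∧ p.1 < q.2 ∧ q.2 < p.2)

/-- The circle graph `G(M)` of a matching `M`: vertices are the `2k` special chords together
with the matching chords `{x, M x}` for `x ∈ U`, adjacent iff the chords interleave. -/
def matchGraph (k ℓ : ℕ) (M : ↥(upperPts k ℓ) ≃ ↥(lowerPts k ℓ)) :
    SimpleGraph (Fin (2 * k) ⊕ ↥(upperPts k ℓ)) :=
  SimpleGraph.fromRel (fun u v => Interleave (chordOf k ℓ M u) (chordOf k ℓ M v))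

/-- A good matching is recoverable from its partially colored circle graph: if the graphs of
two good matchings `M₁, M₂` are isomorphic via an isomorphism fixing each special-chord vertex,
then `M₁ = M₂`. -/

-- helpers

def upIdx (ℓ x : ℕ) : ℕ := (x - 2) / (ℓ + 2)
def lowIdx (k ℓ v : ℕ) : ℕ := (v - (k * (ℓ + 2) + 2)) / (ℓ + 2)

lemma mem_upperPts_iff {k ℓ x : ℕ} : x ∈ upperPts k ℓ ↔ ∃ i, i < k ∧ x ∈ upperArc ℓ i := by
  simp [upperPts]
lemma mem_lowerPts_iff {k ℓ x : ℕ} : x ∈ lowerPts k ℓ ↔ ∃ j, j < k ∧ x ∈ lowerArc k ℓ j := by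
  simp [lowerPts]

lemma upperArc_mono {ℓ i i' x y : ℕ} (h : i < i') (hx : x ∈ upperArc ℓ i)
    (hy : y ∈ upperArc ℓ i') : x < y := by
  obtain ⟨hx1, hx2⟩ := hx
  obtain ⟨hy1, hy2⟩ := hy
  have h1 : (i + 1) * (ℓ + 2) ≤ i' * (ℓ + 2) := Nat.mul_le_mul_right _ h
  omega

lemma upperArc_inj {ℓ i i' x : ℕ} (hx : x ∈ upperArc ℓ i) (hx' : x ∈ upperArc ℓ i') : i = i' := by
  rcases lt_trichotomy i i' with h | h | h
  · exact absurd (upperArc_mono h hx hx') (lt_irrefl x)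
  · exact h
  · exact absurd (upperArc_mono h hx' hx) (lt_irrefl x)

lemma lowerArc_mono {k ℓ j j' x y : ℕ} (h : j < j') (hx : x ∈ lowerArc k ℓ j)
    (hy : y ∈ lowerArc k ℓ j') : x < y := by
  obtain ⟨hx1, hx2⟩ := hx
  obtain ⟨hy1, hy2⟩ := hy
  have h1 : (j + 1) * (ℓ + 2) ≤ j' * (ℓ + 2) := Nat.mul_le_mul_right _ h
  omega

lemma lowerArc_inj {k ℓ j j' x : ℕ} (hx : x ∈ lowerArc k ℓ j) (hx' : x ∈ lowerArc k ℓ j') :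
    j = j' := by
  rcases lt_trichotomy j j' with h | h | h
  · exact absurd (lowerArc_mono h hx hx') (lt_irrefl x)
  · exact h
  · exact absurd (lowerArc_mono h hx' hx) (lt_irrefl x)

lemma upperArc_lt_iff {ℓ i i' x y : ℕ} (hx : x ∈ upperArc ℓ i) (hy : y ∈ upperArc ℓ i')
    (hne : i ≠ i') : (x < y ↔ i < i') := by
  constructor
  · intro hxy
    rcases lt_trichotomy i i' with h | h | h
    · exact h
    · exact absurd h hne
    · exact absurd (upperArc_mono h hy hx) (by omega)
  · intro h; exact upperArc_mono h hx hy

lemma lowerArc_lt_iff {k ℓ j j' x y : ℕ} (hx : x ∈ lowerArc k ℓ j) (hy : y ∈ lowerArc k ℓ j')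
    (hne : j ≠ j') : (x < y ↔ j < j') := by
  constructor
  · intro hxy
    rcases lt_trichotomy j j' with h | h | h
    · exact h
    · exact absurd h hne
    · exact absurd (lowerArc_mono h hy hx) (by omega)
  · intro h; exact lowerArc_mono h hx hy

lemma upperArc_lt_n {k ℓ i x : ℕ} (hi : i < k) (hx : x ∈ upperArc ℓ i) : x < k * (ℓ + 2) := by
  obtain ⟨hx1, hx2⟩ := hx
  have h1 : (i + 1) * (ℓ + 2) ≤ k * (ℓ + 2) := Nat.mul_le_mul_right _ (by omega)
  omega

lemma upperPts_lt_n {k ℓ x : ℕ} (hx : x ∈ upperPts k ℓ) : x < k * (ℓ + 2) := by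
  obtain ⟨i, hi, hx⟩ := mem_upperPts_iff.mp hx
  exact upperArc_lt_n hi hx

lemma lowerArc_gt_n {k ℓ j x : ℕ} (hx : x ∈ lowerArc k ℓ j) : k * (ℓ + 2) + 1 < x := by
  obtain ⟨hx1, hx2⟩ := hx; omega

lemma lowerPts_gt_n {k ℓ x : ℕ} (hx : x ∈ lowerPts k ℓ) : k * (ℓ + 2) + 1 < x := by
  obtain ⟨j, hj, hx⟩ := mem_lowerPts_iff.mp hx
  exact lowerArc_gt_n hx

lemma upIdx_eq {ℓ i x : ℕ} (hx : x ∈ upperArc ℓ i) : upIdx ℓ x = i := by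
  obtain ⟨h1, h2⟩ := hx
  have e : (i + 1) * (ℓ + 2) = i * (ℓ + 2) + (ℓ + 2) := by ring
  exact Nat.div_eq_of_lt_le (by omega) (by omega)

lemma lowIdx_eq {k ℓ j x : ℕ} (hx : x ∈ lowerArc k ℓ j) : lowIdx k ℓ x = j := by
  obtain ⟨h1, h2⟩ := hx
  have e : (j + 1) * (ℓ + 2) = j * (ℓ + 2) + (ℓ + 2) := by ring
  exact Nat.div_eq_of_lt_le (by omega) (by omega)

-- abstract counting lemma
lemma count_aux (lo hi : ℕ) (f c : ℕ → ℕ)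
    (hmap : ∀ x, lo < x → x < hi → lo < f x ∧ f x < hi)
    (hinj : ∀ x y, lo < x → x < hi → lo < y → y < hi → f x = f y → x = y)
    (hcl : ∀ x y z, lo < x → x < hi → lo < y → y < hi → lo < z → z < hi →
        x ≠ y → x ≠ z → y ≠ z → c x = c y → c x = c z → False)
    (hord : ∀ x y, lo < x → x < hi → lo < y → y < hi → c x ≠ c y → x < y → f x < f y) :
    ∀ x, lo < x → x < hi → x ≤ f x + 1 := by
  classical
  intro x hx1 hx2
  set Z : Finset ℕ := (Finset.Ioo lo x).filter (fun z => ¬ (c z = c x)) with hZ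
  have hZcard : Z.card ≤ (Finset.Ioo lo (f x)).card := by
    apply Finset.card_le_card_of_injOn f
    · intro z hz
      simp only [hZ, Finset.mem_coe, Finset.mem_filter, Finset.mem_Ioo] at hz
      obtain ⟨⟨h1, h2⟩, h3⟩ := hz
      have hz2 : z < hi := lt_trans h2 hx2
      have hm := hmap z h1 hz2
      have ho := hord z x h1 hz2 hx1 hx2 h3 h2
      simp only [Finset.mem_coe, Finset.mem_Ioo]
      omega
    · intro a ha b hb hab
      simp only [hZ, Finset.coe_filter, Set.mem_setOf_eq, Finset.mem_Ioo] at ha hb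
      exact hinj a b ha.1.1 (lt_trans ha.1.2 hx2) hb.1.1 (lt_trans hb.1.2 hx2) hab
  have hsplit := Finset.card_filter_add_card_filter_not
    (s := Finset.Ioo lo x) (fun z => c z = c x)
  rw [← hZ] at hsplit
  have hone : ((Finset.Ioo lo x).filter (fun z => c z = c x)).card ≤ 1 := by
    apply Finset.card_le_one.mpr
    intro a ha b hb
    simp only [Finset.mem_filter, Finset.mem_Ioo] at ha hb
    by_contra hab
    exact hcl a b x ha.1.1 (lt_trans ha.1.2 hx2) hb.1.1 (lt_trans hb.1.2 hx2) hx1 hx2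
      hab (by omega) (by omega) (ha.2.trans hb.2.symm) ha.2
  have h1 := Nat.card_Ioo lo x
  have h2 := Nat.card_Ioo lo (f x)
  have h3 := (hmap x hx1 hx2).1
  omega

lemma interleave_pair {a b c d : ℕ} :
    Interleave (a, b) (c, d) ↔ (a < c ∧ c < b ∧ b < d) ∨ (c < a ∧ a < d ∧ d < b) := Iff.rfl

lemma adj_inl_upper (k ℓ : ℕ) (M : ↥(upperPts k ℓ) ≃ ↥(lowerPts k ℓ))
    (j : Fin (2 * k)) (hj : (j : ℕ) < k) (x : ↥(upperPts k ℓ)) :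
    (matchGraph k ℓ M).Adj (Sum.inl j) (Sum.inr x) ↔ (x : ℕ) ∈ upperArc ℓ (j : ℕ) := by
  have hxU : (x : ℕ) < k * (ℓ + 2) := upperPts_lt_n x.2
  have hML : k * (ℓ + 2) + 1 < (M x : ℕ) := lowerPts_gt_n (M x).2
  have hjk : ((j : ℕ) + 1) * (ℓ + 2) ≤ k * (ℓ + 2) := Nat.mul_le_mul_right _ (by omega)
  rw [matchGraph, SimpleGraph.fromRel_adj]
  simp only [chordOf, Sum.elim_inl, Sum.elim_inr, specialChord, if_pos hj, interleave_pair]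
  rw [upperArc, Set.mem_Ioo]
  constructor
  · rintro ⟨-, h⟩; omega
  · intro h; exact ⟨by simp, by omega⟩

lemma adj_inl_lower (k ℓ : ℕ) (M : ↥(upperPts k ℓ) ≃ ↥(lowerPts k ℓ))
    (j : Fin (2 * k)) (hj : k ≤ (j : ℕ)) (x : ↥(upperPts k ℓ)) :
    (matchGraph k ℓ M).Adj (Sum.inl j) (Sum.inr x) ↔
      (M x : ℕ) ∈ lowerArc k ℓ ((j : ℕ) - k) := by
  have hxU : (x : ℕ) < k * (ℓ + 2) := upperPts_lt_n x.2
  have hML : k * (ℓ + 2) + 1 < (M x : ℕ) := lowerPts_gt_n (M x).2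
  have hjn : ¬ ((j : ℕ) < k) := by omega
  rw [matchGraph, SimpleGraph.fromRel_adj]
  simp only [chordOf, Sum.elim_inl, Sum.elim_inr, specialChord, if_neg hjn, interleave_pair]
  rw [lowerArc, Set.mem_Ioo]
  constructor
  · rintro ⟨-, h⟩; omega
  · intro h; exact ⟨by simp, by omega⟩

lemma adj_inr_inr (k ℓ : ℕ) (M : ↥(upperPts k ℓ) ≃ ↥(lowerPts k ℓ))
    (x y : ↥(upperPts k ℓ)) (hxy : x ≠ y) :
    (matchGraph k ℓ M).Adj (Sum.inr x) (Sum.inr y) ↔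
      ((x : ℕ) < (y : ℕ) ↔ (M x : ℕ) < (M y : ℕ)) := by
  have hxU : (x : ℕ) < k * (ℓ + 2) := upperPts_lt_n x.2
  have hyU : (y : ℕ) < k * (ℓ + 2) := upperPts_lt_n y.2
  have hMx : k * (ℓ + 2) + 1 < (M x : ℕ) := lowerPts_gt_n (M x).2
  have hMy : k * (ℓ + 2) + 1 < (M y : ℕ) := lowerPts_gt_n (M y).2
  have hne : (x : ℕ) ≠ (y : ℕ) := fun h => hxy (Subtype.ext h)
  have hMne : (M x : ℕ) ≠ (M y : ℕ) := fun h => hxy (M.injective (Subtype.ext h))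
  rw [matchGraph, SimpleGraph.fromRel_adj]
  simp only [chordOf, Sum.elim_inr, interleave_pair]
  constructor
  · rintro ⟨-, h⟩; omega
  · intro h
    refine ⟨by simp [hxy], by omega⟩


lemma structure_aux (lo hi : ℕ) (f g c d : ℕ → ℕ)
    (hf : ∀ x, lo < x → x < hi → lo < f x ∧ f x < hi)
    (hg : ∀ x, lo < x → x < hi → lo < g x ∧ g x < hi)
    (hgf : ∀ x, lo < x → x < hi → g (f x) = x)
    (hfg : ∀ x, lo < x → x < hi → f (g x) = x)
    (hclc : ∀ x y z, lo < x → x < hi → lo < y → y < hi → lo < z → z < hi →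
        x ≠ y → x ≠ z → y ≠ z → c x = c y → c x = c z → False)
    (hcld : ∀ x y z, lo < x → x < hi → lo < y → y < hi → lo < z → z < hi →
        x ≠ y → x ≠ z → y ≠ z → d x = d y → d x = d z → False)
    (hdf : ∀ x, lo < x → x < hi → d (f x) = c x)
    (hord : ∀ x y, lo < x → x < hi → lo < y → y < hi → c x ≠ c y → (x < y ↔ f x < f y)) :
    ∀ x, lo < x → x < hi → f x = x ∨ (f (f x) = x ∧ c (f x) = c x ∧ f x ≠ x) := by
  -- injectivity of f and g
  have hinjf : ∀ x y, lo < x → x < hi → lo < y → y < hi → f x = f y → x = y := by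
    intro x y hx1 hx2 hy1 hy2 h
    have := hgf x hx1 hx2
    have := hgf y hy1 hy2
    rw [h] at *; omega
  have hinjg : ∀ x y, lo < x → x < hi → lo < y → y < hi → g x = g y → x = y := by
    intro x y hx1 hx2 hy1 hy2 h
    have := hfg x hx1 hx2
    have := hfg y hy1 hy2
    rw [h] at *; omega
  have hcg : ∀ x, lo < x → x < hi → c (g x) = d x := by
    intro x hx1 hx2
    have h1 := hg x hx1 hx2
    have h2 := hdf (g x) h1.1 h1.2
    rw [hfg x hx1 hx2] at h2
    exact h2.symm
  have hordg : ∀ x y, lo < x → x < hi → lo < y → y < hi → d x ≠ d y → (x < y ↔ g x < g y) := by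
    intro x y hx1 hx2 hy1 hy2 hne
    have h1 := hg x hx1 hx2
    have h2 := hg y hy1 hy2
    have h3 : c (g x) ≠ c (g y) := by
      rw [hcg x hx1 hx2, hcg y hy1 hy2]; exact hne
    have := hord (g x) (g y) h1.1 h1.2 h2.1 h2.2 h3
    rw [hfg x hx1 hx2, hfg y hy1 hy2] at this
    exact this.symm
  -- bounds
  have B1 : ∀ x, lo < x → x < hi → x ≤ f x + 1 :=
    count_aux lo hi f c hf hinjf hclc (fun x y hx1 hx2 hy1 hy2 hne hlt =>
      (hord x y hx1 hx2 hy1 hy2 hne).mp hlt)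
  have B2 : ∀ x, lo < x → x < hi → x ≤ g x + 1 :=
    count_aux lo hi g d hg hinjg hcld (fun x y hx1 hx2 hy1 hy2 hne hlt =>
      (hordg x y hx1 hx2 hy1 hy2 hne).mp hlt)
  have B3 : ∀ x, lo < x → x < hi → f x ≤ x + 1 := by
    intro x hx1 hx2
    have h1 := hf x hx1 hx2
    have := B2 (f x) h1.1 h1.2
    rw [hgf x hx1 hx2] at this
    omega
  have B4 : ∀ x, lo < x → x < hi → g x ≤ x + 1 := by
    intro x hx1 hx2
    have h1 := hg x hx1 hx2
    have := B1 (g x) h1.1 h1.2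
    rw [hfg x hx1 hx2] at this
    omega
  -- main induction
  have MAIN : ∀ x, lo < x → x < hi →
      (f x = x ∨ (f x = x + 1 ∧ f (x + 1) = x) ∨ (x = f x + 1 ∧ f (f x) = x)) := by
    intro x
    induction x using Nat.strong_induction_on with
    | _ x ih =>
      intro hx1 hx2
      have hb1 := B1 x hx1 hx2
      have hb3 := B3 x hx1 hx2
      have hfx := hf x hx1 hx2
      rcases lt_trichotomy (f x) x with hlt | heq | hgt
      · -- f x = x - 1
        have hfxv : x = f x + 1 := by omega
        right; right
        refine ⟨hfxv, ?_⟩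
        set z := f x with hz
        have hz1 : lo < z := hfx.1
        have hz2 : z < hi := hfx.2
        have hgz : g z = x := by rw [hz]; exact hgf x hx1 hx2
        rcases ih z (by omega) hz1 hz2 with h | h | h
        · -- f z = z : contradiction
          exfalso
          have := hgf z hz1 hz2
          rw [h] at this
          omega
        · -- f z = z + 1 and z + 1 = x
          have : z + 1 = x := by omega
          rw [this] at h
          exact h.1
        · -- f z = z - 1 : contradiction by injectivity
          exfalso
          have hfz := hf z hz1 hz2
          have heq2 : f (f z) = f x := by rw [h.2, hz]
          have hfzx := hinjf (f z) x hfz.1 hfz.2 hx1 hx2 heq2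
          omega
      · exact Or.inl heq
      · -- f x = x + 1
        have hfxv : f x = x + 1 := by omega
        right; left
        refine ⟨hfxv, ?_⟩
        have hgx := hg x hx1 hx2
        have hw1 : x ≤ g x + 1 := B2 x hx1 hx2
        have hw2 : g x ≤ x + 1 := B4 x hx1 hx2
        have hgne : g x ≠ x := by
          intro h
          have := hfg x hx1 hx2
          rw [h] at this
          omega
        rcases lt_trichotomy (g x) x with h | h | h
        · -- g x = x - 1, so f (x-1) = x, derive contradiction via ih
          exfalso
          have hgxv : g x = x - 1 := by omega
          have hfgx : f (x - 1) = x := by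
            have := hfg x hx1 hx2
            rw [hgxv] at this
            exact this
          have hr1 : lo < x - 1 := by rw [← hgxv]; exact hgx.1
          have hr2 : x - 1 < hi := by rw [← hgxv]; exact hgx.2
          rcases ih (x - 1) (by omega) hr1 hr2 with h' | h' | h'
          · rw [hfgx] at h'; omega
          · have : x - 1 + 1 = x := by omega
            rw [this, hfgx] at h'
            omega
          · rw [hfgx] at h'; omega
        · exact absurd h hgne
        · have hgxv : g x = x + 1 := by omega
          have := hfg x hx1 hx2
          rw [hgxv] at this
          exact this
  -- wrap up
  intro x hx1 hx2
  rcases MAIN x hx1 hx2 with h | h | h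
  · exact Or.inl h
  · obtain ⟨ha, hb⟩ := h
    right
    have hx3 : lo < x + 1 ∧ x + 1 < hi := by
      have := hf x hx1 hx2; rw [ha] at this; exact this
    refine ⟨by rw [ha]; exact hb, ?_, by omega⟩
    rw [ha]
    by_contra hne
    have ho := (hord x (x + 1) hx1 hx2 hx3.1 hx3.2 (fun hc => hne hc.symm)).mp (by omega)
    rw [ha, hb] at ho
    omega
  · obtain ⟨ha, hb⟩ := h
    right
    refine ⟨hb, ?_, by omega⟩
    by_contra hne
    have hfx := hf x hx1 hx2
    have ho := (hord (f x) x hfx.1 hfx.2 hx1 hx2 hne).mp (by omega)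
    rw [hb] at ho
    omega


open Classical in
noncomputable def extFn (P : Set ℕ) (f : ↥P → ℕ) : ℕ → ℕ :=
  fun m => if h : m ∈ P then f ⟨m, h⟩ else m

lemma extFn_apply (P : Set ℕ) (f : ↥P → ℕ) (x : ↥P) : extFn P f ↑x = f x := by
  simp [extFn]

set_option maxHeartbeats 2000000 in
theorem stmt10 (k ℓ : ℕ) (hk : 0 < k) (hℓ : 0 < ℓ)
    (M₁ M₂ : ↥(upperPts k ℓ) ≃ ↥(lowerPts k ℓ))
    (h₁ : GoodMatching k ℓ M₁) (h₂ : GoodMatching k ℓ M₂)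
    (φ : matchGraph k ℓ M₁ ≃g matchGraph k ℓ M₂)
    (hφ : ∀ j : Fin (2 * k), φ (Sum.inl j) = Sum.inl j) :
    M₁ = M₂ := by
  classical
  -- step 1: φ restricts to a permutation σ of (upperPts k ℓ) (with inverse σ')
  have hφsymm : ∀ j : Fin (2 * k), φ.symm (Sum.inl j) = Sum.inl j := by
    intro j
    conv_lhs => rw [← hφ j]
    exact φ.symm_apply_apply _
  have hσex : ∀ x : ↥(upperPts k ℓ), ∃ y, φ (Sum.inr x) = Sum.inr y := by
    intro x
    cases h : φ (Sum.inr x) with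
    | inl j =>
        exfalso
        have h2 : φ (Sum.inr x) = φ (Sum.inl j) := by rw [h, hφ j]
        exact (by simp : Sum.inr x ≠ Sum.inl j) (φ.injective h2)
    | inr y => exact ⟨y, rfl⟩
  have hσ'ex : ∀ x : ↥(upperPts k ℓ), ∃ y, φ.symm (Sum.inr x) = Sum.inr y := by
    intro x
    cases h : φ.symm (Sum.inr x) with
    | inl j =>
        exfalso
        have h2 : φ.symm (Sum.inr x) = φ.symm (Sum.inl j) := by rw [h, hφsymm j]
        exact (by simp : Sum.inr x ≠ Sum.inl j) (φ.symm.injective h2)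
    | inr y => exact ⟨y, rfl⟩
  choose σ hσ using hσex
  choose σ' hσ' using hσ'ex
  have hσσ' : ∀ x, σ (σ' x) = x := by
    intro x
    have h1 : φ (φ.symm (Sum.inr x)) = Sum.inr x := φ.apply_symm_apply _
    rw [hσ' x, hσ (σ' x)] at h1
    exact Sum.inr.inj h1
  have hσ'σ : ∀ x, σ' (σ x) = x := by
    intro x
    have h1 : φ.symm (φ (Sum.inr x)) = Sum.inr x := φ.symm_apply_apply _
    rw [hσ x, hσ' (σ x)] at h1
    exact Sum.inr.inj h1
  have hσinj : ∀ x y, σ x = σ y → x = y := by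
    intro x y h
    rw [← hσ'σ x, h, hσ'σ y]
  -- step 2: transfer of adjacency along φ
  have TR1 : ∀ (x : ↥(upperPts k ℓ)) (i : ℕ), i < k →
      ((x : ℕ) ∈ upperArc ℓ i ↔ ((σ x : ℕ)) ∈ upperArc ℓ i) := by
    intro x i hi
    have hi2 : i < 2 * k := by omega
    have h1 := adj_inl_upper k ℓ M₁ ⟨i, hi2⟩ hi x
    have h2 := adj_inl_upper k ℓ M₂ ⟨i, hi2⟩ hi (σ x)
    have h3 := SimpleGraph.Iso.map_adj_iff φ (v := Sum.inl ⟨i, hi2⟩) (w := Sum.inr x)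
    rw [hφ _, hσ x] at h3
    rw [← h1, ← h3, h2]
  have TR2 : ∀ (x : ↥(upperPts k ℓ)) (j : ℕ), j < k →
      ((M₁ x : ℕ) ∈ lowerArc k ℓ j ↔ ((M₂ (σ x) : ℕ)) ∈ lowerArc k ℓ j) := by
    intro x j hj
    have hj2 : k + j < 2 * k := by omega
    have he : ((⟨k + j, hj2⟩ : Fin (2 * k)) : ℕ) - k = j := by simp
    have h1 := adj_inl_lower k ℓ M₁ ⟨k + j, hj2⟩ (by simp) x
    have h2 := adj_inl_lower k ℓ M₂ ⟨k + j, hj2⟩ (by simp) (σ x)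
    rw [he] at h1 h2
    have h3 := SimpleGraph.Iso.map_adj_iff φ (v := Sum.inl ⟨k + j, hj2⟩) (w := Sum.inr x)
    rw [hφ _, hσ x] at h3
    rw [← h1, ← h3, h2]
  have TR3 : ∀ (x y : ↥(upperPts k ℓ)), x ≠ y →
      (((x : ℕ) < (y : ℕ) ↔ (M₁ x : ℕ) < (M₁ y : ℕ)) ↔
        (((σ x : ℕ)) < ((σ y : ℕ)) ↔ (M₂ (σ x) : ℕ) < (M₂ (σ y) : ℕ))) := by
    intro x y hxy
    have hσne : σ x ≠ σ y := fun h => hxy (hσinj _ _ h)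
    have h1 := adj_inr_inr k ℓ M₁ x y hxy
    have h2 := adj_inr_inr k ℓ M₂ (σ x) (σ y) hσne
    have h3 := SimpleGraph.Iso.map_adj_iff φ (v := Sum.inr x) (w := Sum.inr y)
    rw [hσ x, hσ y] at h3
    rw [← h1, ← h3, h2]
  -- step 3: the eight auxiliary functions on ℕ
  set F : ℕ → ℕ := extFn (upperPts k ℓ) (fun x => ((σ x : ℕ))) with hFdef
  set G : ℕ → ℕ := extFn (upperPts k ℓ) (fun x => ((σ' x : ℕ))) with hGdef
  set C : ℕ → ℕ := extFn (upperPts k ℓ) (fun x => lowIdx k ℓ (M₁ x : ℕ)) with hCdef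
  set D : ℕ → ℕ := extFn (upperPts k ℓ) (fun x => lowIdx k ℓ (M₂ x : ℕ)) with hDdef
  set T : ℕ → ℕ := extFn (lowerPts k ℓ) (fun u => ((M₂ (σ (M₁.symm u)) : ℕ))) with hTdef
  set T' : ℕ → ℕ := extFn (lowerPts k ℓ) (fun u => ((M₁ (σ' (M₂.symm u)) : ℕ))) with hT'def
  set C' : ℕ → ℕ := extFn (lowerPts k ℓ) (fun u => upIdx ℓ ((M₁.symm u : ℕ))) with hC'def
  set D' : ℕ → ℕ := extFn (lowerPts k ℓ) (fun u => upIdx ℓ ((M₂.symm u : ℕ))) with hD'def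
  have hFeq : ∀ x : ↥(upperPts k ℓ), F ↑x = ((σ x : ℕ)) := fun x => extFn_apply _ _ x
  have hGeq : ∀ x : ↥(upperPts k ℓ), G ↑x = ((σ' x : ℕ)) := fun x => extFn_apply _ _ x
  have hCeq : ∀ x : ↥(upperPts k ℓ), C ↑x = lowIdx k ℓ (M₁ x : ℕ) := fun x => extFn_apply _ _ x
  have hDeq : ∀ x : ↥(upperPts k ℓ), D ↑x = lowIdx k ℓ (M₂ x : ℕ) := fun x => extFn_apply _ _ x
  have hTeq : ∀ u : ↥(lowerPts k ℓ), T ↑u = ((M₂ (σ (M₁.symm u)) : ℕ)) := fun u => extFn_apply _ _ u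
  have hT'eq : ∀ u : ↥(lowerPts k ℓ), T' ↑u = ((M₁ (σ' (M₂.symm u)) : ℕ)) := fun u => extFn_apply _ _ u
  have hC'eq : ∀ u : ↥(lowerPts k ℓ), C' ↑u = upIdx ℓ ((M₁.symm u : ℕ)) := fun u => extFn_apply _ _ u
  have hD'eq : ∀ u : ↥(lowerPts k ℓ), D' ↑u = upIdx ℓ ((M₂.symm u : ℕ)) := fun u => extFn_apply _ _ u
  have hTM : ∀ w : ↥(upperPts k ℓ), T ((M₁ w : ℕ)) = (M₂ (σ w) : ℕ) := by
    intro w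
    rw [hTeq (M₁ w), Equiv.symm_apply_apply]
  have hFeqN : ∀ (m : ℕ) (hm : m ∈ upperPts k ℓ), F m = ((σ ⟨m, hm⟩ : ℕ)) :=
    fun m hm => hFeq ⟨m, hm⟩
  -- membership helpers
  have hmemU : ∀ {m i : ℕ}, i < k → m ∈ upperArc ℓ i → m ∈ (upperPts k ℓ) := by
    intro m i hi hm; exact mem_upperPts_iff.mpr ⟨i, hi, hm⟩
  have hmemL : ∀ {m j : ℕ}, j < k → m ∈ lowerArc k ℓ j → m ∈ (lowerPts k ℓ) := by
    intro m j hj hm; exact mem_lowerPts_iff.mpr ⟨j, hj, hm⟩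
  have hFmem : ∀ {i : ℕ}, i < k → ∀ {m : ℕ}, m ∈ upperArc ℓ i → F m ∈ upperArc ℓ i := by
    intro i hi m hm
    have hmU : m ∈ (upperPts k ℓ) := hmemU hi hm
    rw [hFeq ⟨m, hmU⟩]
    exact (TR1 ⟨m, hmU⟩ i hi).mp hm
  have hGmem : ∀ {i : ℕ}, i < k → ∀ {m : ℕ}, m ∈ upperArc ℓ i → G m ∈ upperArc ℓ i := by
    intro i hi m hm
    have hmU : m ∈ (upperPts k ℓ) := hmemU hi hm
    rw [hGeq ⟨m, hmU⟩]
    have h2 := TR1 (σ' ⟨m, hmU⟩) i hi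
    rw [hσσ'] at h2
    exact h2.mpr hm
  have hGF : ∀ {m : ℕ}, m ∈ (upperPts k ℓ) → G (F m) = m := by
    intro m hmU
    rw [hFeq ⟨m, hmU⟩, hGeq (σ ⟨m, hmU⟩), hσ'σ]
  have hFG : ∀ {m : ℕ}, m ∈ (upperPts k ℓ) → F (G m) = m := by
    intro m hmU
    rw [hGeq ⟨m, hmU⟩, hFeq (σ' ⟨m, hmU⟩), hσσ']
  have hCval : ∀ (x : ↥(upperPts k ℓ)) {j : ℕ}, (M₁ x : ℕ) ∈ lowerArc k ℓ j → C ↑x = j := by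
    intro x j hj; rw [hCeq x, lowIdx_eq hj]
  have hDval : ∀ (x : ↥(upperPts k ℓ)) {j : ℕ}, (M₂ x : ℕ) ∈ lowerArc k ℓ j → D ↑x = j := by
    intro x j hj; rw [hDeq x, lowIdx_eq hj]
  have hC'val : ∀ (u : ↥(lowerPts k ℓ)) {i : ℕ}, ((M₁.symm u : ℕ)) ∈ upperArc ℓ i → C' ↑u = i := by
    intro u i hi; rw [hC'eq u, upIdx_eq hi]
  have hD'val : ∀ (u : ↥(lowerPts k ℓ)) {i : ℕ}, ((M₂.symm u : ℕ)) ∈ upperArc ℓ i → D' ↑u = i := by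
    intro u i hi; rw [hD'eq u, upIdx_eq hi]
  have hCvalN : ∀ (m : ℕ) (hm : m ∈ upperPts k ℓ) {j : ℕ},
      (M₁ ⟨m, hm⟩ : ℕ) ∈ lowerArc k ℓ j → C m = j := by
    intro m hm j hj; exact hCval ⟨m, hm⟩ hj
  have hDvalN : ∀ (m : ℕ) (hm : m ∈ upperPts k ℓ) {j : ℕ},
      (M₂ ⟨m, hm⟩ : ℕ) ∈ lowerArc k ℓ j → D m = j := by
    intro m hm j hj; exact hDval ⟨m, hm⟩ hj
  have hC'valN : ∀ (m : ℕ) (hm : m ∈ lowerPts k ℓ) {i : ℕ},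
      ((M₁.symm ⟨m, hm⟩ : ℕ)) ∈ upperArc ℓ i → C' m = i := by
    intro m hm i hi; exact hC'val ⟨m, hm⟩ hi
  have hD'valN : ∀ (m : ℕ) (hm : m ∈ lowerPts k ℓ) {i : ℕ},
      ((M₂.symm ⟨m, hm⟩ : ℕ)) ∈ upperArc ℓ i → D' m = i := by
    intro m hm i hi; exact hD'val ⟨m, hm⟩ hi
  have hgood₁ : ∀ {i j : ℕ}, i < k → j < k → ∀ (x y z : ↥(upperPts k ℓ)), x ≠ y → x ≠ z → y ≠ z →
      (x : ℕ) ∈ upperArc ℓ i → (y : ℕ) ∈ upperArc ℓ i → (z : ℕ) ∈ upperArc ℓ i →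
      (M₁ x : ℕ) ∈ lowerArc k ℓ j → (M₁ y : ℕ) ∈ lowerArc k ℓ j →
      (M₁ z : ℕ) ∈ lowerArc k ℓ j → False := by
    intro i j hi hj x y z h1 h2 h3 a1 a2 a3 b1 b2 b3
    exact h₁ ⟨i, hi, j, hj, x, y, z, h1, h2, h3, a1, a2, a3, b1, b2, b3⟩
  have hgood₂ : ∀ {i j : ℕ}, i < k → j < k → ∀ (x y z : ↥(upperPts k ℓ)), x ≠ y → x ≠ z → y ≠ z →
      (x : ℕ) ∈ upperArc ℓ i → (y : ℕ) ∈ upperArc ℓ i → (z : ℕ) ∈ upperArc ℓ i →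
      (M₂ x : ℕ) ∈ lowerArc k ℓ j → (M₂ y : ℕ) ∈ lowerArc k ℓ j →
      (M₂ z : ℕ) ∈ lowerArc k ℓ j → False := by
    intro i j hi hj x y z h1 h2 h3 a1 a2 a3 b1 b2 b3
    exact h₂ ⟨i, hi, j, hj, x, y, z, h1, h2, h3, a1, a2, a3, b1, b2, b3⟩
  have hsubne : ∀ {m m' : ℕ} (hm : m ∈ (upperPts k ℓ)) (hm' : m' ∈ (upperPts k ℓ)), m ≠ m' →
      (⟨m, hm⟩ : ↥(upperPts k ℓ)) ≠ ⟨m', hm'⟩ := by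
    intro m m' hm hm' hne h
    exact hne (congrArg Subtype.val h)
  -- structure of σ on each upper arc
  have SStruct : ∀ {i : ℕ}, i < k → ∀ {m : ℕ}, m ∈ upperArc ℓ i →
      F m = m ∨ (F (F m) = m ∧ C (F m) = C m ∧ F m ≠ m) := by
    intro i hi
    have harc : ∀ m : ℕ, m ∈ upperArc ℓ i ↔ (i * (ℓ + 2) + 1 < m ∧ m < (i + 1) * (ℓ + 2)) :=
      fun m => Set.mem_Ioo
    have main := structure_aux (i * (ℓ + 2) + 1) ((i + 1) * (ℓ + 2)) F G C D
      (fun m h1 h2 => (harc _).mp (hFmem hi ((harc m).mpr ⟨h1, h2⟩)))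
      (fun m h1 h2 => (harc _).mp (hGmem hi ((harc m).mpr ⟨h1, h2⟩)))
      (fun m h1 h2 => hGF (hmemU hi ((harc m).mpr ⟨h1, h2⟩)))
      (fun m h1 h2 => hFG (hmemU hi ((harc m).mpr ⟨h1, h2⟩)))
      ?_ ?_ ?_ ?_
    · intro m hm
      exact main m ((harc m).mp hm).1 ((harc m).mp hm).2
    · -- classes of C have ≤ 2 elements
      intro x y z hx1 hx2 hy1 hy2 hz1 hz2 nxy nxz nyz e1 e2
      have hxU : x ∈ (upperPts k ℓ) := hmemU hi ((harc x).mpr ⟨hx1, hx2⟩)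
      have hyU : y ∈ (upperPts k ℓ) := hmemU hi ((harc y).mpr ⟨hy1, hy2⟩)
      have hzU : z ∈ (upperPts k ℓ) := hmemU hi ((harc z).mpr ⟨hz1, hz2⟩)
      obtain ⟨jx, hjx, hax⟩ := mem_lowerPts_iff.mp (M₁ ⟨x, hxU⟩).2
      obtain ⟨jy, hjy, hay⟩ := mem_lowerPts_iff.mp (M₁ ⟨y, hyU⟩).2
      obtain ⟨jz, hjz, haz⟩ := mem_lowerPts_iff.mp (M₁ ⟨z, hzU⟩).2
      have ey : jy = jx := by
        have c1 := hCvalN x hxU hax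
        have c2 := hCvalN y hyU hay
        omega
      have ez : jz = jx := by
        have c1 := hCvalN x hxU hax
        have c3 := hCvalN z hzU haz
        omega
      rw [ey] at hay
      rw [ez] at haz
      exact hgood₁ hi hjx ⟨x, hxU⟩ ⟨y, hyU⟩ ⟨z, hzU⟩ (hsubne hxU hyU nxy) (hsubne hxU hzU nxz)
        (hsubne hyU hzU nyz) ((harc x).mpr ⟨hx1, hx2⟩) ((harc y).mpr ⟨hy1, hy2⟩)
        ((harc z).mpr ⟨hz1, hz2⟩) hax hay haz
    · -- classes of D have ≤ 2 elements
      intro x y z hx1 hx2 hy1 hy2 hz1 hz2 nxy nxz nyz e1 e2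
      have hxU : x ∈ upperPts k ℓ := hmemU hi ((harc x).mpr ⟨hx1, hx2⟩)
      have hyU : y ∈ upperPts k ℓ := hmemU hi ((harc y).mpr ⟨hy1, hy2⟩)
      have hzU : z ∈ upperPts k ℓ := hmemU hi ((harc z).mpr ⟨hz1, hz2⟩)
      obtain ⟨jx, hjx, hax⟩ := mem_lowerPts_iff.mp (M₂ ⟨x, hxU⟩).2
      obtain ⟨jy, hjy, hay⟩ := mem_lowerPts_iff.mp (M₂ ⟨y, hyU⟩).2
      obtain ⟨jz, hjz, haz⟩ := mem_lowerPts_iff.mp (M₂ ⟨z, hzU⟩).2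
      have ey : jy = jx := by
        have c1 := hDvalN x hxU hax
        have c2 := hDvalN y hyU hay
        omega
      have ez : jz = jx := by
        have c1 := hDvalN x hxU hax
        have c3 := hDvalN z hzU haz
        omega
      rw [ey] at hay
      rw [ez] at haz
      exact hgood₂ hi hjx ⟨x, hxU⟩ ⟨y, hyU⟩ ⟨z, hzU⟩ (hsubne hxU hyU nxy) (hsubne hxU hzU nxz)
        (hsubne hyU hzU nyz) ((harc x).mpr ⟨hx1, hx2⟩) ((harc y).mpr ⟨hy1, hy2⟩)
        ((harc z).mpr ⟨hz1, hz2⟩) hax hay haz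
    · -- D ∘ F = C
      intro m h1 h2
      have hmU : m ∈ upperPts k ℓ := hmemU hi ((harc m).mpr ⟨h1, h2⟩)
      obtain ⟨j, hj, haj⟩ := mem_lowerPts_iff.mp (M₁ ⟨m, hmU⟩).2
      have h3 : (M₂ (σ ⟨m, hmU⟩) : ℕ) ∈ lowerArc k ℓ j := (TR2 ⟨m, hmU⟩ j hj).mp haj
      rw [hFeqN m hmU, hCvalN m hmU haj]
      exact hDval (σ ⟨m, hmU⟩) h3
    · -- order preservation across distinct C-classes
      intro x y hx1 hx2 hy1 hy2 hne
      have hxU : x ∈ upperPts k ℓ := hmemU hi ((harc x).mpr ⟨hx1, hx2⟩)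
      have hyU : y ∈ upperPts k ℓ := hmemU hi ((harc y).mpr ⟨hy1, hy2⟩)
      obtain ⟨jx, hjx, hax⟩ := mem_lowerPts_iff.mp (M₁ ⟨x, hxU⟩).2
      obtain ⟨jy, hjy, hay⟩ := mem_lowerPts_iff.mp (M₁ ⟨y, hyU⟩).2
      have hjne : jx ≠ jy := by
        have c1 := hCvalN x hxU hax
        have c2 := hCvalN y hyU hay
        omega
      have hXY : (⟨x, hxU⟩ : ↥(upperPts k ℓ)) ≠ ⟨y, hyU⟩ := by
        intro h
        exact hne (congrArg C (congrArg Subtype.val h))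
      have h1 := lowerArc_lt_iff hax hay hjne
      have hax2 := (TR2 ⟨x, hxU⟩ jx hjx).mp hax
      have hay2 := (TR2 ⟨y, hyU⟩ jy hjy).mp hay
      have h2 := lowerArc_lt_iff hax2 hay2 hjne
      have h3' := TR3 ⟨x, hxU⟩ ⟨y, hyU⟩ hXY
      have h3 : ((x < y ↔ (M₁ ⟨x, hxU⟩ : ℕ) < (M₁ ⟨y, hyU⟩ : ℕ)) ↔
          (((σ ⟨x, hxU⟩ : ℕ)) < ((σ ⟨y, hyU⟩ : ℕ)) ↔
            (M₂ (σ ⟨x, hxU⟩) : ℕ) < (M₂ (σ ⟨y, hyU⟩) : ℕ))) := h3'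
      rw [hFeqN x hxU, hFeqN y hyU]
      omega
  -- structure of the induced map τ = T on each lower arc
  have hTmem : ∀ {j : ℕ}, j < k → ∀ {m : ℕ}, m ∈ lowerArc k ℓ j → T m ∈ lowerArc k ℓ j := by
    intro j hj m hm
    have hmL : m ∈ lowerPts k ℓ := hmemL hj hm
    rw [hTeq ⟨m, hmL⟩]
    have h2 := TR2 (M₁.symm ⟨m, hmL⟩) j hj
    rw [Equiv.apply_symm_apply] at h2
    exact h2.mp hm
  have hT'mem : ∀ {j : ℕ}, j < k → ∀ {m : ℕ}, m ∈ lowerArc k ℓ j → T' m ∈ lowerArc k ℓ j := by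
    intro j hj m hm
    have hmL : m ∈ lowerPts k ℓ := hmemL hj hm
    rw [hT'eq ⟨m, hmL⟩]
    have h2 := TR2 (σ' (M₂.symm ⟨m, hmL⟩)) j hj
    rw [hσσ', Equiv.apply_symm_apply] at h2
    exact h2.mpr hm
  have hT'T : ∀ {m : ℕ}, m ∈ lowerPts k ℓ → T' (T m) = m := by
    intro m hmL
    rw [hTeq ⟨m, hmL⟩, hT'eq (M₂ (σ (M₁.symm ⟨m, hmL⟩))), Equiv.symm_apply_apply, hσ'σ,
      Equiv.apply_symm_apply]
  have hTT' : ∀ {m : ℕ}, m ∈ lowerPts k ℓ → T (T' m) = m := by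
    intro m hmL
    rw [hT'eq ⟨m, hmL⟩, hTeq (M₁ (σ' (M₂.symm ⟨m, hmL⟩))), Equiv.symm_apply_apply, hσσ',
      Equiv.apply_symm_apply]
  have TStruct : ∀ {j : ℕ}, j < k → ∀ {m : ℕ}, m ∈ lowerArc k ℓ j →
      T m = m ∨ (T (T m) = m ∧ C' (T m) = C' m ∧ T m ≠ m) := by
    intro j hj
    have harc : ∀ m : ℕ, m ∈ lowerArc k ℓ j ↔
        (k * (ℓ + 2) + j * (ℓ + 2) + 1 < m ∧ m < k * (ℓ + 2) + (j + 1) * (ℓ + 2)) :=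
      fun m => Set.mem_Ioo
    have main := structure_aux (k * (ℓ + 2) + j * (ℓ + 2) + 1) (k * (ℓ + 2) + (j + 1) * (ℓ + 2))
      T T' C' D'
      (fun m h1 h2 => (harc _).mp (hTmem hj ((harc m).mpr ⟨h1, h2⟩)))
      (fun m h1 h2 => (harc _).mp (hT'mem hj ((harc m).mpr ⟨h1, h2⟩)))
      (fun m h1 h2 => hT'T (hmemL hj ((harc m).mpr ⟨h1, h2⟩)))
      (fun m h1 h2 => hTT' (hmemL hj ((harc m).mpr ⟨h1, h2⟩)))
      ?_ ?_ ?_ ?_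
    · intro m hm
      exact main m ((harc m).mp hm).1 ((harc m).mp hm).2
    · -- classes of C' have ≤ 2 elements
      intro x y z hx1 hx2 hy1 hy2 hz1 hz2 nxy nxz nyz e1 e2
      have hxL : x ∈ lowerPts k ℓ := hmemL hj ((harc x).mpr ⟨hx1, hx2⟩)
      have hyL : y ∈ lowerPts k ℓ := hmemL hj ((harc y).mpr ⟨hy1, hy2⟩)
      have hzL : z ∈ lowerPts k ℓ := hmemL hj ((harc z).mpr ⟨hz1, hz2⟩)
      obtain ⟨ix, hix, hax⟩ := mem_upperPts_iff.mp (M₁.symm ⟨x, hxL⟩).2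
      obtain ⟨iy, hiy, hay⟩ := mem_upperPts_iff.mp (M₁.symm ⟨y, hyL⟩).2
      obtain ⟨iz, hiz, haz⟩ := mem_upperPts_iff.mp (M₁.symm ⟨z, hzL⟩).2
      have ey : iy = ix := by
        have c1 := hC'valN x hxL hax
        have c2 := hC'valN y hyL hay
        omega
      have ez : iz = ix := by
        have c1 := hC'valN x hxL hax
        have c3 := hC'valN z hzL haz
        omega
      rw [ey] at hay
      rw [ez] at haz
      have m1 : (M₁ (M₁.symm ⟨x, hxL⟩) : ℕ) ∈ lowerArc k ℓ j := by
        rw [Equiv.apply_symm_apply]; exact (harc x).mpr ⟨hx1, hx2⟩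
      have m2 : (M₁ (M₁.symm ⟨y, hyL⟩) : ℕ) ∈ lowerArc k ℓ j := by
        rw [Equiv.apply_symm_apply]; exact (harc y).mpr ⟨hy1, hy2⟩
      have m3 : (M₁ (M₁.symm ⟨z, hzL⟩) : ℕ) ∈ lowerArc k ℓ j := by
        rw [Equiv.apply_symm_apply]; exact (harc z).mpr ⟨hz1, hz2⟩
      refine hgood₁ hix hj (M₁.symm ⟨x, hxL⟩) (M₁.symm ⟨y, hyL⟩) (M₁.symm ⟨z, hzL⟩)
        ?_ ?_ ?_ hax hay haz m1 m2 m3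
      · intro h; exact nxy (congrArg Subtype.val (M₁.symm.injective h))
      · intro h; exact nxz (congrArg Subtype.val (M₁.symm.injective h))
      · intro h; exact nyz (congrArg Subtype.val (M₁.symm.injective h))
    · -- classes of D' have ≤ 2 elements
      intro x y z hx1 hx2 hy1 hy2 hz1 hz2 nxy nxz nyz e1 e2
      have hxL : x ∈ lowerPts k ℓ := hmemL hj ((harc x).mpr ⟨hx1, hx2⟩)
      have hyL : y ∈ lowerPts k ℓ := hmemL hj ((harc y).mpr ⟨hy1, hy2⟩)
      have hzL : z ∈ lowerPts k ℓ := hmemL hj ((harc z).mpr ⟨hz1, hz2⟩)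
      obtain ⟨ix, hix, hax⟩ := mem_upperPts_iff.mp (M₂.symm ⟨x, hxL⟩).2
      obtain ⟨iy, hiy, hay⟩ := mem_upperPts_iff.mp (M₂.symm ⟨y, hyL⟩).2
      obtain ⟨iz, hiz, haz⟩ := mem_upperPts_iff.mp (M₂.symm ⟨z, hzL⟩).2
      have ey : iy = ix := by
        have c1 := hD'valN x hxL hax
        have c2 := hD'valN y hyL hay
        omega
      have ez : iz = ix := by
        have c1 := hD'valN x hxL hax
        have c3 := hD'valN z hzL haz
        omega
      rw [ey] at hay
      rw [ez] at haz
      have m1 : (M₂ (M₂.symm ⟨x, hxL⟩) : ℕ) ∈ lowerArc k ℓ j := by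
        rw [Equiv.apply_symm_apply]; exact (harc x).mpr ⟨hx1, hx2⟩
      have m2 : (M₂ (M₂.symm ⟨y, hyL⟩) : ℕ) ∈ lowerArc k ℓ j := by
        rw [Equiv.apply_symm_apply]; exact (harc y).mpr ⟨hy1, hy2⟩
      have m3 : (M₂ (M₂.symm ⟨z, hzL⟩) : ℕ) ∈ lowerArc k ℓ j := by
        rw [Equiv.apply_symm_apply]; exact (harc z).mpr ⟨hz1, hz2⟩
      refine hgood₂ hix hj (M₂.symm ⟨x, hxL⟩) (M₂.symm ⟨y, hyL⟩) (M₂.symm ⟨z, hzL⟩)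
        ?_ ?_ ?_ hax hay haz m1 m2 m3
      · intro h; exact nxy (congrArg Subtype.val (M₂.symm.injective h))
      · intro h; exact nxz (congrArg Subtype.val (M₂.symm.injective h))
      · intro h; exact nyz (congrArg Subtype.val (M₂.symm.injective h))
    · -- D' ∘ T = C'
      intro m h1 h2
      have hmL : m ∈ lowerPts k ℓ := hmemL hj ((harc m).mpr ⟨h1, h2⟩)
      obtain ⟨i, hi, ha⟩ := mem_upperPts_iff.mp (M₁.symm ⟨m, hmL⟩).2
      have hs : ((σ (M₁.symm ⟨m, hmL⟩) : ℕ)) ∈ upperArc ℓ i := (TR1 _ i hi).mp ha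
      rw [hTeq ⟨m, hmL⟩, hC'valN m hmL ha]
      have e1 := hD'eq (M₂ (σ (M₁.symm ⟨m, hmL⟩)))
      rw [Equiv.symm_apply_apply] at e1
      rw [e1]
      exact upIdx_eq hs
    · -- order preservation across distinct C'-classes
      intro u v hu1 hu2 hv1 hv2 hne
      have huL : u ∈ lowerPts k ℓ := hmemL hj ((harc u).mpr ⟨hu1, hu2⟩)
      have hvL : v ∈ lowerPts k ℓ := hmemL hj ((harc v).mpr ⟨hv1, hv2⟩)
      obtain ⟨iu, hiu, hau⟩ := mem_upperPts_iff.mp (M₁.symm ⟨u, huL⟩).2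
      obtain ⟨iv, hiv, hav⟩ := mem_upperPts_iff.mp (M₁.symm ⟨v, hvL⟩).2
      have hine : iu ≠ iv := by
        have c1 := hC'valN u huL hau
        have c2 := hC'valN v hvL hav
        omega
      have hXY : M₁.symm ⟨u, huL⟩ ≠ M₁.symm ⟨v, hvL⟩ := by
        intro h
        exact hne (congrArg C' (congrArg Subtype.val (M₁.symm.injective h)))
      have h1 := upperArc_lt_iff hau hav hine
      have hsu := (TR1 (M₁.symm ⟨u, huL⟩) iu hiu).mp hau
      have hsv := (TR1 (M₁.symm ⟨v, hvL⟩) iv hiv).mp hav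
      have h2 := upperArc_lt_iff hsu hsv hine
      have h3' := TR3 (M₁.symm ⟨u, huL⟩) (M₁.symm ⟨v, hvL⟩) hXY
      rw [Equiv.apply_symm_apply, Equiv.apply_symm_apply] at h3'
      have h3 : ((((M₁.symm ⟨u, huL⟩ : ℕ)) < ((M₁.symm ⟨v, hvL⟩ : ℕ)) ↔ u < v) ↔
          (((σ (M₁.symm ⟨u, huL⟩) : ℕ)) < ((σ (M₁.symm ⟨v, hvL⟩) : ℕ)) ↔
            (M₂ (σ (M₁.symm ⟨u, huL⟩)) : ℕ) < (M₂ (σ (M₁.symm ⟨v, hvL⟩)) : ℕ))) := h3'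
      rw [hTeq ⟨u, huL⟩, hTeq ⟨v, hvL⟩]
      omega
  -- small converse helpers
  have hσfix : ∀ w : ↥(upperPts k ℓ), F ((w : ℕ)) = ((w : ℕ)) → σ w = w := by
    intro w hw
    apply Subtype.ext
    rw [← hFeq w]; exact hw
  have hCmem : ∀ (w : ↥(upperPts k ℓ)) {j' : ℕ}, j' < k → C ((w : ℕ)) = j' →
      (M₁ w : ℕ) ∈ lowerArc k ℓ j' := by
    intro w j' hj' hc
    obtain ⟨j0, hj0, h0⟩ := mem_lowerPts_iff.mp (M₁ w).2
    have e1 := hCval w h0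
    have e : j0 = j' := by omega
    rw [← e]; exact h0
  have hC'arc : ∀ (m : ℕ) (hm : m ∈ lowerPts k ℓ) {i' : ℕ}, i' < k → C' m = i' →
      ((M₁.symm ⟨m, hm⟩ : ℕ)) ∈ upperArc ℓ i' := by
    intro m hm i' hi' hc
    obtain ⟨i0, hi0, h0⟩ := mem_upperPts_iff.mp (M₁.symm ⟨m, hm⟩).2
    have e1 := hC'valN m hm h0
    have e : i0 = i' := by omega
    rw [← e]; exact h0
  -- main conclusion
  apply Equiv.ext
  intro z
  have hyz : σ (σ' z) = z := hσσ' z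
  obtain ⟨i, hi, hyarc⟩ := mem_upperPts_iff.mp (σ' z).2
  obtain ⟨j, hj, huarc⟩ := mem_lowerPts_iff.mp (M₁ (σ' z)).2
  have hzarc : (z : ℕ) ∈ upperArc ℓ i := by
    have h := (TR1 (σ' z) i hi).mp hyarc
    rw [hyz] at h; exact h
  have hueq : T ((M₁ (σ' z) : ℕ)) = (M₂ z : ℕ) := by rw [hTM (σ' z), hyz]
  suffices hS : T ((M₁ (σ' z) : ℕ)) = (M₁ z : ℕ) by
    apply Subtype.ext
    rw [← hS]; exact hueq
  rcases SStruct hi hyarc with hc1 | ⟨hFF, hCC, hFne⟩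
  · -- case 1 : σ fixes σ' z, i.e. z = σ' z
    have hzy : z = σ' z := by
      apply Subtype.ext
      have e := hFeq (σ' z)
      rw [hyz] at e
      rw [← e, hc1]
    have hσz : σ z = z := by
      have h := hyz
      rw [← hzy] at h
      exact h
    rw [← hzy] at huarc hueq ⊢
    rcases TStruct hj huarc with hd1 | ⟨hTT, hCC', hTne⟩
    · exact hd1
    · exfalso
      have hvB : T ((M₁ z : ℕ)) ∈ lowerArc k ℓ j := hTmem hj huarc
      have hvL : T ((M₁ z : ℕ)) ∈ lowerPts k ℓ := hmemL hj hvB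
      have hC'u : C' ((M₁ z : ℕ)) = i := by
        have e1 := hC'eq (M₁ z)
        rw [Equiv.symm_apply_apply] at e1
        rw [e1]
        exact upIdx_eq hzarc
      have hC'v : C' (T ((M₁ z : ℕ))) = i := by rw [hCC', hC'u]
      have hyi' := hC'arc _ hvL hi hC'v
      have eM1Y' : (M₁ (M₁.symm ⟨T ((M₁ z : ℕ)), hvL⟩) : ℕ) = T ((M₁ z : ℕ)) := by
        rw [Equiv.apply_symm_apply]
      have hy'z : M₁.symm ⟨T ((M₁ z : ℕ)), hvL⟩ ≠ z := by
        intro h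
        apply hTne
        have e := congrArg (fun w => ((M₁ w : ℕ))) h
        rw [eM1Y'] at e
        exact e
      have hzny' : z ≠ M₁.symm ⟨T ((M₁ z : ℕ)), hvL⟩ := fun h => hy'z h.symm
      rcases SStruct hi hyi' with he1 | ⟨hFF2, hCC2, hFne2⟩
      · -- σ fixes the partner too: contradiction via crossing transfer
        have hσY' := hσfix _ he1
        have h3' := TR3 z (M₁.symm ⟨T ((M₁ z : ℕ)), hvL⟩) hzny'
        rw [hσz, hσY'] at h3'
        rw [eM1Y'] at h3'
        have eA : (M₂ z : ℕ) = T ((M₁ z : ℕ)) := hueq.symm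
        have eB : (M₂ (M₁.symm ⟨T ((M₁ z : ℕ)), hvL⟩) : ℕ) = (M₁ z : ℕ) := by
          have t := hTM (M₁.symm ⟨T ((M₁ z : ℕ)), hvL⟩)
          rw [hσY'] at t
          rw [eM1Y'] at t
          rw [hTT] at t
          exact t.symm
        rw [eA, eB] at h3'
        have hne2 : T ((M₁ z : ℕ)) ≠ (M₁ z : ℕ) := hTne
        omega
      · -- σ swaps the partner with a third point: contradicts goodness of M₁
        have hY''arc : ((σ (M₁.symm ⟨T ((M₁ z : ℕ)), hvL⟩) : ℕ)) ∈ upperArc ℓ i := by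
          have h := hFmem hi hyi'
          rw [hFeq] at h; exact h
        have hM1Y'B : (M₁ (M₁.symm ⟨T ((M₁ z : ℕ)), hvL⟩) : ℕ) ∈ lowerArc k ℓ j := by
          rw [eM1Y']; exact hvB
        have hCY' : C ((M₁.symm ⟨T ((M₁ z : ℕ)), hvL⟩ : ℕ)) = j := hCval _ hM1Y'B
        have hCσY' : C ((σ (M₁.symm ⟨T ((M₁ z : ℕ)), hvL⟩) : ℕ)) = j := by
          have e := hCC2
          rw [hFeq] at e
          rw [e, hCY']
        have hM1σY'B := hCmem _ hj hCσY'
        have hy'ne'' : M₁.symm ⟨T ((M₁ z : ℕ)), hvL⟩ ≠ σ (M₁.symm ⟨T ((M₁ z : ℕ)), hvL⟩) := by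
          intro h
          apply hFne2
          rw [hFeq]
          exact (congrArg Subtype.val h).symm
        have hzne'' : z ≠ σ (M₁.symm ⟨T ((M₁ z : ℕ)), hvL⟩) := by
          intro h
          have e : σ (M₁.symm ⟨T ((M₁ z : ℕ)), hvL⟩) = σ z := by rw [← h, hσz]
          exact hy'z (hσinj _ _ e)
        exact hgood₁ hi hj z (M₁.symm ⟨T ((M₁ z : ℕ)), hvL⟩)
          (σ (M₁.symm ⟨T ((M₁ z : ℕ)), hvL⟩))
          hzny' hzne'' hy'ne'' hzarc hyi' hY''arc huarc hM1Y'B hM1σY'B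
  · -- case 2 : σ swaps σ' z and z
    have eFy : F ((σ' z : ℕ)) = (z : ℕ) := by rw [hFeq (σ' z), hyz]
    have hzyne : (z : ℕ) ≠ ((σ' z : ℕ)) := by rw [← eFy]; exact hFne
    have hzy : z ≠ σ' z := fun h => hzyne (congrArg Subtype.val h)
    have hσz : σ z = σ' z := by
      apply Subtype.ext
      rw [eFy] at hFF
      rw [← hFeq z]; exact hFF
    have hCy : C ((σ' z : ℕ)) = j := hCval _ huarc
    have hCz : C ((z : ℕ)) = j := by
      rw [eFy] at hCC
      rw [hCC, hCy]
    have hvB : (M₁ z : ℕ) ∈ lowerArc k ℓ j := hCmem z hj hCz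
    have hvne : (M₁ z : ℕ) ≠ ((M₁ (σ' z) : ℕ)) := by
      intro h
      exact hzy (M₁.injective (Subtype.ext h))
    rcases TStruct hj huarc with hTu | ⟨hTT, hCC', hTne⟩
    · exfalso
      rcases TStruct hj hvB with hTv | ⟨hTT2, hCC'2, hTne2⟩
      · -- both fixed: contradiction via crossing transfer
        have h3' := TR3 (σ' z) z (fun h => hzy h.symm)
        rw [hyz, hσz] at h3'
        have eA : (M₂ z : ℕ) = ((M₁ (σ' z) : ℕ)) := by rw [← hueq, hTu]
        have eB : (M₂ (σ' z) : ℕ) = (M₁ z : ℕ) := by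
          have t := hTM z
          rw [hσz] at t
          rw [hTv] at t
          exact t.symm
        rw [eA, eB] at h3'
        omega
      · -- partner of v : three points contradiction
        have hwB : T ((M₁ z : ℕ)) ∈ lowerArc k ℓ j := hTmem hj hvB
        have hwL := hmemL hj hwB
        have hwu : T ((M₁ z : ℕ)) ≠ ((M₁ (σ' z) : ℕ)) := by
          intro h
          have e1 := hT'T (hmemL hj huarc)
          rw [hTu] at e1
          have e2 := hT'T (hmemL hj hvB)
          rw [h] at e2
          rw [e1] at e2
          exact hvne e2.symm
        have hC'v : C' ((M₁ z : ℕ)) = i := by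
          have e1 := hC'eq (M₁ z)
          rw [Equiv.symm_apply_apply] at e1
          rw [e1]; exact upIdx_eq hzarc
        have hC'w : C' (T ((M₁ z : ℕ))) = i := by rw [hCC'2, hC'v]
        have hy3arc := hC'arc _ hwL hi hC'w
        have eM1y3 : (M₁ (M₁.symm ⟨T ((M₁ z : ℕ)), hwL⟩) : ℕ) = T ((M₁ z : ℕ)) := by
          rw [Equiv.apply_symm_apply]
        have hy3M1B : (M₁ (M₁.symm ⟨T ((M₁ z : ℕ)), hwL⟩) : ℕ) ∈ lowerArc k ℓ j := by
          rw [eM1y3]; exact hwB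
        have hy3ne1 : σ' z ≠ M₁.symm ⟨T ((M₁ z : ℕ)), hwL⟩ := by
          intro h
          apply hwu
          have e := congrArg (fun w => ((M₁ w : ℕ))) h
          rw [eM1y3] at e
          exact e.symm
        have hy3ne2 : z ≠ M₁.symm ⟨T ((M₁ z : ℕ)), hwL⟩ := by
          intro h
          apply hTne2
          have e := congrArg (fun w => ((M₁ w : ℕ))) h
          rw [eM1y3] at e
          exact e.symm
        exact hgood₁ hi hj (σ' z) z (M₁.symm ⟨T ((M₁ z : ℕ)), hwL⟩)
          (fun h => hzy h.symm) hy3ne1 hy3ne2 hyarc hzarc hy3arc huarc hvB hy3M1B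
    · -- u is swapped with some w : show w = v
      by_cases hwv : T ((M₁ (σ' z) : ℕ)) = (M₁ z : ℕ)
      · exact hwv
      · exfalso
        have hwB : T ((M₁ (σ' z) : ℕ)) ∈ lowerArc k ℓ j := hTmem hj huarc
        have hwL := hmemL hj hwB
        have hC'u : C' ((M₁ (σ' z) : ℕ)) = i := by
          have e1 := hC'eq (M₁ (σ' z))
          rw [Equiv.symm_apply_apply] at e1
          rw [e1]; exact upIdx_eq hyarc
        have hC'w : C' (T ((M₁ (σ' z) : ℕ))) = i := by rw [hCC', hC'u]
        have hy3arc := hC'arc _ hwL hi hC'w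
        have eM1y3 : (M₁ (M₁.symm ⟨T ((M₁ (σ' z) : ℕ)), hwL⟩) : ℕ) = T ((M₁ (σ' z) : ℕ)) := by
          rw [Equiv.apply_symm_apply]
        have hy3M1B : (M₁ (M₁.symm ⟨T ((M₁ (σ' z) : ℕ)), hwL⟩) : ℕ) ∈ lowerArc k ℓ j := by
          rw [eM1y3]; exact hwB
        have hy3ne1 : σ' z ≠ M₁.symm ⟨T ((M₁ (σ' z) : ℕ)), hwL⟩ := by
          intro h
          apply hTne
          have e := congrArg (fun w => ((M₁ w : ℕ))) h
          rw [eM1y3] at e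
          exact e.symm
        have hy3ne2 : z ≠ M₁.symm ⟨T ((M₁ (σ' z) : ℕ)), hwL⟩ := by
          intro h
          apply hwv
          have e := congrArg (fun w => ((M₁ w : ℕ))) h
          rw [eM1y3] at e
          exact e.symm
        exact hgood₁ hi hj (σ' z) z (M₁.symm ⟨T ((M₁ (σ' z) : ℕ)), hwL⟩)
          (fun h => hzy h.symm) hy3ne1 hy3ne2 hyarc hzarc hy3arc huarc hvB hy3M1B
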